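/- Let n be a positive integer, let Δ be an integer with 1 ≤ Δ ≤ n, and let x : Fin n → ℤ with x i ∈ {0,1} for every i. For each k with 0 ≤ k < Δ define y k = (if (∑ i, x i) - k = 0 then 0 else 1). Then the equality threshold gate applied to the y k together with a constant input of weight 1 - Δ computes the threshold gate: (if (∑_{k=0}^{Δ-1} y k) + (1 - Δ) = 0 then 0 else 1) = (if (∑ i, x i) ≥ Δ then 1 else 0). Equivalently, ∑_{k=0}^{Δ-1} y k equals Δ when ∑ i, x i ≥ Δ and equals Δ - 1 otherwise. -/

import Mathlib

theorem threshold_gate_by_equality_circuit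
    (n : ℕ) (hn : 0 < n) (Δ : ℤ) (hΔ1 : 1 ≤ Δ) (hΔn : Δ ≤ n)
    (x : Fin n → ℤ) (hx : ∀ i, x i = 0 ∨ x i = 1)
    (y : ℤ → ℤ) (hy : ∀ k, y k = if (∑ i, x i) - k = 0 then 0 else 1) :
    (if (∑ k ∈ Finset.Ico (0 : ℤ) Δ, y k) + (1 - Δ) = 0 then (0 : ℤ) else 1)
      = (if (∑ i, x i) ≥ Δ then 1 else 0) ∧
    (∑ k ∈ Finset.Ico (0 : ℤ) Δ, y k)
      = (if (∑ i, x i) ≥ Δ then Δ else Δ - 1) := by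
  set S := ∑ i, x i with hS
  have hS0 : 0 ≤ S := Finset.sum_nonneg fun i _ => by rcases hx i with h | h <;> simp [h]
  have hy' : ∀ k, y k = 1 - (if S = k then 1 else 0) := by
    intro k; rw [hy k]; by_cases h : S = k <;> simp [h, sub_eq_zero]
  have hcard : ((Finset.Ico (0 : ℤ) Δ).card : ℤ) = Δ := by
    rw [Int.card_Ico]; simp; linarith
  have hsum : (∑ k ∈ Finset.Ico (0 : ℤ) Δ, y k)
      = Δ - (if S ∈ Finset.Ico (0 : ℤ) Δ then 1 else 0) := by
    rw [Finset.sum_congr rfl (fun k _ => hy' k), Finset.sum_sub_distrib,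
      Finset.sum_ite_eq, Finset.sum_const, nsmul_eq_mul, mul_one, hcard]
  rw [hsum]
  by_cases h : S ≥ Δ
  · have hmem : S ∉ Finset.Ico (0 : ℤ) Δ := by simp; intro; linarith
    rw [if_neg hmem, if_pos h, if_pos h]
    exact ⟨by rw [if_neg (by linarith)], by ring⟩
  · have hmem : S ∈ Finset.Ico (0 : ℤ) Δ := by simp [hS0]; linarith
    rw [if_pos hmem, if_neg h, if_neg h]
    exact ⟨by rw [if_pos (by ring)], by ring⟩
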